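/- For every natural number n and every real number a, the function y(x) = D_n(x, a) satisfies the second-order linear differential equation (x² − 4a)·y''(x) + x·y'(x) − n²·y(x) = 0 for all real x. -/

import Mathlib

/-- The `n`-th Dickson polynomial of the first kind over `ℝ`, evaluated at `x` with
parameter `a`: `D_0(x,a) = 2` and, for `n ≥ 1`,
`D_n(x,a) = Σ_{k=0}^{⌊n/2⌋} (n/(n-k)) · C(n-k,k) · (-a)^k · x^(n-2k)`. -/
noncomputable def dicksonR (n : ℕ) (x a : ℝ) : ℝ :=
  if n = 0 then 2
  else ∑ k ∈ Finset.range (n / 2 + 1),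
    ((n : ℝ) / ((n : ℝ) - (k : ℝ))) * (Nat.choose (n - k) k : ℝ) * (-a) ^ k * x ^ (n - 2 * k)

/-- Key binomial identity. -/
lemma choose_key (k m : ℕ) :
    Nat.choose (k + m + 2) k * ((m + 2) * (m + 1))
      = (k + m + 2) * ((k + 1) * Nat.choose (k + m + 1) (k + 1)) := by
  have h1 := Nat.choose_mul_succ_eq (k + m + 1) k
  have h2 := Nat.choose_succ_right_eq (k + m + 1) k
  have e1 : k + m + 1 + 1 = k + m + 2 := by omega
  have e2 : k + m + 1 + 1 - k = m + 2 := by omega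
  have e3 : k + m + 1 - k = m + 1 := by omega
  rw [e1, e2] at h1
  rw [e3] at h2
  calc Nat.choose (k + m + 2) k * ((m + 2) * (m + 1))
      = Nat.choose (k + m + 2) k * (m + 2) * (m + 1) := by ring
    _ = Nat.choose (k + m + 1) k * (k + m + 2) * (m + 1) := by rw [← h1]
    _ = (k + m + 2) * (Nat.choose (k + m + 1) k * (m + 1)) := by ring
    _ = (k + m + 2) * (Nat.choose (k + m + 1) (k + 1) * (k + 1)) := by rw [← h2]
    _ = (k + m + 2) * ((k + 1) * Nat.choose (k + m + 1) (k + 1)) := by ring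


/-- `y(x) = D_n(x,a)` satisfies `(x² − 4a)·y'' + x·y' − n²·y = 0`. -/
theorem dickson_ode (n : ℕ) (a x : ℝ) :
    (x ^ 2 - 4 * a) * deriv (deriv (fun t : ℝ => dicksonR n t a)) x
      + x * deriv (fun t : ℝ => dicksonR n t a) x
      - (n : ℝ) ^ 2 * dicksonR n x a = 0 := by
  by_cases hn : n = 0
  · subst hn
    have h : (fun t : ℝ => dicksonR 0 t a) = fun _ => (2 : ℝ) := by
      funext t; simp [dicksonR]
    rw [h]
    simp [dicksonR]
  · set K := n / 2 with hK
    set c : ℕ → ℝ := fun k =>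
      (n : ℝ) / ((n : ℝ) - (k : ℝ)) * (Nat.choose (n - k) k : ℝ) * (-a) ^ k with hc
    have hfun : (fun t : ℝ => dicksonR n t a)
        = fun t => ∑ k ∈ Finset.range (K + 1), c k * t ^ (n - 2 * k) := by
      funext t; simp only [dicksonR, if_neg hn, hc, hK]
    have hd1 : ∀ y : ℝ, HasDerivAt (fun t : ℝ => dicksonR n t a)
        (∑ k ∈ Finset.range (K + 1),
          c k * (((n - 2 * k : ℕ) : ℝ) * y ^ (n - 2 * k - 1))) y := by
      intro y
      rw [hfun]
      exact HasDerivAt.fun_sum fun k _ => (hasDerivAt_pow (n - 2 * k) y).const_mul (c k)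
    have hderiv1 : deriv (fun t : ℝ => dicksonR n t a)
        = fun y => ∑ k ∈ Finset.range (K + 1),
            c k * (((n - 2 * k : ℕ) : ℝ) * y ^ (n - 2 * k - 1)) :=
      funext fun y => (hd1 y).deriv
    have hd2 : HasDerivAt (fun y : ℝ => ∑ k ∈ Finset.range (K + 1),
          c k * (((n - 2 * k : ℕ) : ℝ) * y ^ (n - 2 * k - 1)))
        (∑ k ∈ Finset.range (K + 1),
          c k * (((n - 2 * k : ℕ) : ℝ) * (((n - 2 * k - 1 : ℕ) : ℝ) * x ^ (n - 2 * k - 1 - 1)))) x :=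
      HasDerivAt.fun_sum fun k _ =>
        ((hasDerivAt_pow (n - 2 * k - 1) x).const_mul ((n - 2 * k : ℕ) : ℝ)).const_mul (c k)
    have h0 : dicksonR n x a = ∑ k ∈ Finset.range (K + 1), c k * x ^ (n - 2 * k) :=
      congrFun hfun x
    rw [hderiv1, h0]
    rw [show deriv (fun y => ∑ k ∈ Finset.range (K + 1),
          c k * (((n - 2 * k : ℕ) : ℝ) * y ^ (n - 2 * k - 1))) x
        = ∑ k ∈ Finset.range (K + 1),
          c k * (((n - 2 * k : ℕ) : ℝ) * (((n - 2 * k - 1 : ℕ) : ℝ) * x ^ (n - 2 * k - 1 - 1)))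
      from hd2.deriv]
    rw [Finset.mul_sum, Finset.mul_sum, Finset.mul_sum, ← Finset.sum_add_distrib,
      ← Finset.sum_sub_distrib]
    set F : ℕ → ℝ := fun k =>
      (n : ℝ) * (Nat.choose (n - k) k : ℝ) * (-a) ^ k * (-(4 : ℝ) * (k : ℝ)) * x ^ (n - 2 * k)
      with hF
    have key : ∀ k ∈ Finset.range (K + 1),
        (x ^ 2 - 4 * a) * (c k * (((n - 2 * k : ℕ) : ℝ)
            * (((n - 2 * k - 1 : ℕ) : ℝ) * x ^ (n - 2 * k - 1 - 1))))
          + x * (c k * (((n - 2 * k : ℕ) : ℝ) * x ^ (n - 2 * k - 1)))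
          - (n : ℝ) ^ 2 * (c k * x ^ (n - 2 * k)) = F k - F (k + 1) := by
      intro k hk
      have hkK : k ≤ K := Nat.lt_succ_iff.mp (Finset.mem_range.mp hk)
      have hk2 : 2 * k ≤ n := by omega
      have hkn : k < n := by omega
      have hnk : ((n : ℝ) - (k : ℝ)) ≠ 0 := by
        have : (k : ℝ) < (n : ℝ) := by exact_mod_cast hkn
        intro h; linarith
      have hcc : c k * ((n : ℝ) - (k : ℝ))
          = (n : ℝ) * ((Nat.choose (n - k) k : ℕ) : ℝ) * (-a) ^ k := by
        simp only [hc]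
        field_simp
      obtain ⟨m, hm⟩ : ∃ m, n = 2 * k + m := ⟨n - 2 * k, by omega⟩
      subst hm
      apply mul_left_cancel₀ hnk
      rcases m with _ | _ | m
      · -- n = 2k
        have e1 : 2 * k + 0 - 2 * k = 0 := by omega
        have e2 : 2 * k + 0 - k = k := by omega
        have e3 : 2 * k + 0 - (k + 1) = k - 1 := by omega
        have e4 : 2 * k + 0 - 2 * (k + 1) = 0 := by omega
        have hch : Nat.choose (k - 1) (k + 1) = 0 := Nat.choose_eq_zero_of_lt (by omega)
        simp only [hF, e1, e2, e3, e4, hch, Nat.choose_self] at hcc ⊢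
        push_cast at hcc ⊢
        linear_combination (-(2 * (k : ℝ)) ^ 2) * hcc
      · -- n = 2k + 1
        have e1 : 2 * k + 1 - 2 * k = 1 := by omega
        have e1' : 2 * k + 1 - 2 * k - 1 = 0 := by omega
        have e2 : 2 * k + 1 - k = k + 1 := by omega
        have e3 : 2 * k + 1 - (k + 1) = k := by omega
        have e4 : 2 * k + 1 - 2 * (k + 1) = 0 := by omega
        have hch : Nat.choose k (k + 1) = 0 := Nat.choose_eq_zero_of_lt (by omega)
        simp only [hF, e1, e1', e2, e3, e4, hch, Nat.choose_succ_self_right] at hcc ⊢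
        push_cast at hcc ⊢
        linear_combination (x * (1 - (2 * (k : ℝ) + 1) ^ 2)) * hcc
      · -- n = 2k + (m+2)
        have e1 : 2 * k + (m + 2) - 2 * k = m + 2 := by omega
        have e1' : 2 * k + (m + 2) - 2 * k - 1 = m + 1 := by omega
        have e1'' : 2 * k + (m + 2) - 2 * k - 1 - 1 = m := by omega
        have e2 : 2 * k + (m + 2) - k = k + m + 2 := by omega
        have e3 : 2 * k + (m + 2) - (k + 1) = k + m + 1 := by omega
        have e4 : 2 * k + (m + 2) - 2 * (k + 1) = m := by omega
        have hAB : ((Nat.choose (k + m + 2) k : ℝ)) * (((m : ℝ) + 2) * ((m : ℝ) + 1))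
            = (((k : ℝ) + m + 2)) * ((((k : ℝ) + 1)) * (Nat.choose (k + m + 1) (k + 1) : ℝ)) := by
          exact_mod_cast congrArg (Nat.cast : ℕ → ℝ) (choose_key k m)
        simp only [hF, e1, e1', e1'', e2, e3, e4] at hcc ⊢
        push_cast at hcc ⊢
        linear_combination
          ((x ^ 2 - 4 * a) * (((m : ℝ) + 2) * (((m : ℝ) + 1) * x ^ m))
            + x * (((m : ℝ) + 2) * x ^ (m + 1))
            - (2 * (k : ℝ) + m + 2) ^ 2 * x ^ (m + 2)) * hcc
          + (-4 * a * x ^ m * (2 * (k : ℝ) + m + 2) * (-a) ^ k) * hAB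
    rw [Finset.sum_congr rfl key, Finset.sum_range_sub' F]
    have hF0 : F 0 = 0 := by simp [hF]
    have hFK : F (K + 1) = 0 := by
      have hlt : n - (K + 1) < K + 1 := by omega
      simp [hF, Nat.choose_eq_zero_of_lt hlt]
    rw [hF0, hFK]; ring
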